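/- For each fixed real x and λ, as ε → 0⁺ the function φ_{λ/ε}^{(α,α)}(εx) := ₂F₁(α + 1/2 + iλ/(2ε), α + 1/2 − iλ/(2ε); α+1; −sinh²(εx)) converges to the normalized Bessel function j_α(λx) = Γ(α+1) Σ_{m≥0} (−1)^m / (m! Γ(α+1+m)) (λx/2)^{2m}. -/

import Mathlib

open Filter
set_option maxHeartbeats 1600000

noncomputable def cpoch (a : ℂ) (k : ℕ) : ℂ := (ascPochhammer ℂ k).eval a

/-- Gauss hypergeometric series ₂F₁(a,b;c;z). -/
noncomputable def hyp2F1 (a b c z : ℂ) : ℂ :=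
  ∑' n : ℕ, cpoch a n * cpoch b n / (cpoch c n * (n.factorial : ℂ)) * z ^ n

/-- Normalized Bessel function j_α(t). -/
noncomputable def besselNorm (α t : ℝ) : ℝ :=
  Real.Gamma (α + 1) *
    ∑' m : ℕ, ((-1 : ℝ) ^ m / ((m.factorial : ℝ) * Real.Gamma (α + 1 + m))) * (t / 2) ^ (2 * m)

lemma cpoch_succ (a : ℂ) (n : ℕ) : cpoch a (n+1) = cpoch a n * (a + n) := by
  simp [cpoch, ascPochhammer_succ_eval]

lemma cpoch_ofReal (r : ℝ) (n : ℕ) :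
    cpoch (r:ℂ) n = (((ascPochhammer ℝ n).eval r : ℝ) : ℂ) := by
  induction n with
  | zero => simp [cpoch]
  | succ n ih => rw [cpoch_succ, ih, ascPochhammer_succ_eval]; push_cast; ring

lemma cpoch_conj_mul (c μ : ℝ) (n : ℕ) :
    cpoch ((c:ℂ) + Complex.I * μ) n * cpoch ((c:ℂ) - Complex.I * μ) n
      = ((∏ k ∈ Finset.range n, ((c + k)^2 + μ^2) : ℝ) : ℂ) := by
  induction n with
  | zero => simp [cpoch]
  | succ n ih =>
    have hfac : ((c:ℂ) + Complex.I*μ + n) * ((c:ℂ) - Complex.I*μ + n)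
        = (((c+n)^2 + μ^2 : ℝ) : ℂ) := by
      push_cast; linear_combination (-(μ:ℂ)^2) * Complex.I_sq
    rw [cpoch_succ, cpoch_succ, mul_mul_mul_comm, ih, hfac, Finset.prod_range_succ]
    push_cast
    ring

lemma gamma_asc (α : ℝ) (hα : 0 < α + 1) (n : ℕ) :
    Real.Gamma (α + 1 + n) = Real.Gamma (α+1) * (ascPochhammer ℝ n).eval (α+1) := by
  induction n with
  | zero => simp
  | succ n ih =>
    have hn : (0:ℝ) ≤ n := Nat.cast_nonneg n
    have h : α + 1 + ((n:ℕ)+1 : ℕ) = (α + 1 + n) + 1 := by push_cast; ring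
    rw [h, Real.Gamma_add_one (by linarith : α+1+(n:ℝ) ≠ 0), ih, ascPochhammer_succ_eval]
    ring

lemma sinh_sq_le (u : ℝ) : Real.sinh u ^ 2 ≤ u^2 * Real.exp (2*|u|) := by
  have key : ∀ v : ℝ, 0 ≤ v → Real.sinh v ≤ v * Real.exp v := by
    intro v hv
    rw [Real.sinh_eq]
    have h1 := Real.add_one_le_exp (-2*v)
    have h2 : Real.exp (-2*v) * Real.exp v = Real.exp (-v) := by
      rw [← Real.exp_add]; ring_nf
    nlinarith [Real.exp_pos v, mul_le_mul_of_nonneg_right h1 (Real.exp_pos v).le]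
  rcases le_total 0 u with hu | hu
  · have h := key u hu
    have hs : 0 ≤ Real.sinh u := Real.sinh_nonneg_iff.mpr hu
    have hx : Real.exp u ^ 2 = Real.exp (2*u) := by rw [sq, ← Real.exp_add]; ring_nf
    rw [abs_of_nonneg hu]
    nlinarith [Real.exp_pos u]
  · have h := key (-u) (by linarith)
    have hs : 0 ≤ Real.sinh (-u) := Real.sinh_nonneg_iff.mpr (by linarith)
    have hx : Real.exp (-u) ^ 2 = Real.exp (2*(-u)) := by rw [sq, ← Real.exp_add]; ring_nf
    rw [abs_of_nonpos hu]
    have he : Real.sinh u ^2 = Real.sinh (-u)^2 := by rw [Real.sinh_neg]; ring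
    rw [he]
    nlinarith [Real.exp_pos (-u)]

/-- real form of the general term -/
noncomputable def rterm (α lam x : ℝ) (ε : ℝ) (n : ℕ) : ℝ :=
  (-1)^n * (∏ k ∈ Finset.range n,
      ((α+1/2+k)^2 * Real.sinh (ε*x)^2 + lam^2/4 * (Real.sinh (ε*x)/ε)^2)) /
    ((ascPochhammer ℝ n).eval (α+1) * n.factorial)

lemma term_eq (α lam x : ℝ) {ε : ℝ} (hε : ε ≠ 0) (n : ℕ) :
    cpoch ((α : ℂ) + 1/2 + Complex.I * lam / (2 * ε)) n *
      cpoch ((α : ℂ) + 1/2 - Complex.I * lam / (2 * ε)) n /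
      (cpoch ((α : ℂ) + 1) n * (n.factorial : ℂ)) * (-(Real.sinh (ε * x) : ℂ) ^ 2) ^ n
    = ((rterm α lam x ε n : ℝ) : ℂ) := by
  have ha : (α : ℂ) + 1/2 + Complex.I * lam / (2*ε)
      = ((α+1/2 : ℝ):ℂ) + Complex.I * ((lam/(2*ε):ℝ):ℂ) := by push_cast; ring
  have hb : (α : ℂ) + 1/2 - Complex.I * lam / (2*ε)
      = ((α+1/2 : ℝ):ℂ) - Complex.I * ((lam/(2*ε):ℝ):ℂ) := by push_cast; ring
  have hc : (α:ℂ) + 1 = ((α+1:ℝ):ℂ) := by push_cast; ring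
  rw [show cpoch ((α : ℂ) + 1/2 + Complex.I * lam / (2 * ε)) n *
      cpoch ((α : ℂ) + 1/2 - Complex.I * lam / (2 * ε)) n /
      (cpoch ((α : ℂ) + 1) n * (n.factorial : ℂ)) * (-(Real.sinh (ε * x) : ℂ) ^ 2) ^ n
    = cpoch (((α+1/2 : ℝ):ℂ) + Complex.I * ((lam/(2*ε):ℝ):ℂ)) n *
      cpoch (((α+1/2 : ℝ):ℂ) - Complex.I * ((lam/(2*ε):ℝ):ℂ)) n /
      (cpoch (((α+1:ℝ):ℂ)) n * (n.factorial : ℂ)) * (-(Real.sinh (ε * x) : ℂ) ^ 2) ^ n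
    by rw [← ha, ← hb, ← hc]]
  rw [cpoch_conj_mul, cpoch_ofReal]
  have hz : (-(Real.sinh (ε*x) : ℂ)^2)^n
      = ((((-1)^n * Real.sinh (ε*x)^(2*n) : ℝ)) : ℂ) := by
    push_cast; rw [pow_mul]; ring
  rw [hz]
  have hfac : ((n.factorial : ℕ) : ℂ) = (((n.factorial : ℝ)) : ℂ) := by push_cast; ring
  rw [hfac, ← Complex.ofReal_mul, ← Complex.ofReal_div, ← Complex.ofReal_mul]
  rw [Complex.ofReal_inj]
  unfold rterm
  rw [pow_mul]
  have hP : (∏ k ∈ Finset.range n, ((α+1/2 + k)^2 + (lam/(2*ε))^2)) * (Real.sinh (ε*x)^2)^n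
      = ∏ k ∈ Finset.range n,
        ((α+1/2+k)^2 * Real.sinh (ε*x)^2 + lam^2/4 * (Real.sinh (ε*x)/ε)^2) := by
    rw [show (Real.sinh (ε*x)^2)^n = ∏ _k ∈ Finset.range n, Real.sinh (ε*x)^2 by
      rw [Finset.prod_const, Finset.card_range]]
    rw [← Finset.prod_mul_distrib]
    refine Finset.prod_congr rfl fun k _ => ?_
    field_simp
    ring
  rw [← hP]
  ring

lemma bessel_eq (α : ℝ) (hα : 0 < α + 1) (t : ℝ) :
    besselNorm α t
      = ∑' n : ℕ, (-1:ℝ)^n * (t^2/4)^n / ((ascPochhammer ℝ n).eval (α+1) * n.factorial) := by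
  unfold besselNorm
  rw [← tsum_mul_left]
  refine tsum_congr fun m => ?_
  rw [gamma_asc α hα m]
  have hQ : (0:ℝ) < (ascPochhammer ℝ m).eval (α+1) := ascPochhammer_pos m _ hα
  have hG : (0:ℝ) < Real.Gamma (α+1) := Real.Gamma_pos_of_pos hα
  have hf : (0:ℝ) < m.factorial := by positivity
  have ht : (t/2)^(2*m) = (t^2/4)^m := by
    rw [pow_mul]; congr 1; ring
  rw [ht]
  field_simp

lemma g_summable (c L A e K : ℝ) (hA : 0 < A) (hL : 0 ≤ L) (hK : 0 ≤ K)
    (heK : e^2*K ≤ 1/4) :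
    Summable (fun n : ℕ => (∏ k ∈ Finset.range n, (((c+k)^2*e^2 + L) * K)) /
      ((ascPochhammer ℝ n).eval A * n.factorial)) := by
  set g : ℕ → ℝ := fun n => (∏ k ∈ Finset.range n, (((c+k)^2*e^2 + L) * K)) /
      ((ascPochhammer ℝ n).eval A * n.factorial) with hg
  have hQpos : ∀ n : ℕ, (0:ℝ) < (ascPochhammer ℝ n).eval A := fun n => ascPochhammer_pos n A hA
  have hgnn : ∀ n, 0 ≤ g n := by
    intro n
    apply div_nonneg
    · exact Finset.prod_nonneg fun k _ => by positivity
    · have := hQpos n; positivity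
  apply summable_of_ratio_norm_eventually_le (r := 1/2) (by norm_num)
  have hN : ∀ᶠ n : ℕ in atTop, (4*(|c| + A + L*K + c^2 + 1) : ℝ) ≤ n :=
    tendsto_natCast_atTop_atTop.eventually_ge_atTop _
  filter_upwards [hN] with n hn
  have hu0 : (0:ℝ) ≤ n := Nat.cast_nonneg n
  have hu1 : (1:ℝ) ≤ n := by nlinarith [abs_nonneg c, sq_nonneg c, mul_nonneg hL hK]
  have hden : (0:ℝ) < (A + n) * (n + 1) := by positivity
  have key : g (n+1) = g n * ((((c+n)^2*e^2 + L) * K) / ((A + n) * (n + 1))) := by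
    simp only [hg]
    rw [Finset.prod_range_succ, ascPochhammer_succ_eval, Nat.factorial_succ,
      div_mul_div_comm]
    congr 1
    push_cast
    ring
  have hfac : (((c+n)^2*e^2 + L) * K) / ((A + n) * (n + 1)) ≤ 1/2 := by
    rw [div_le_iff₀ hden]
    have p1 : (0:ℝ) ≤ (c+(n:ℝ))^2 * (1/4 - e^2*K) :=
      mul_nonneg (sq_nonneg _) (by linarith)
    have p2 : (n:ℝ)*(4*(|c| + A + L*K + c^2 + 1)) ≤ (n:ℝ)*(n:ℝ) :=
      mul_le_mul_of_nonneg_left hn hu0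
    have p3 : (n:ℝ)*c ≤ (n:ℝ)*|c| := mul_le_mul_of_nonneg_left (le_abs_self c) hu0
    have p4 : (0:ℝ) ≤ ((n:ℝ) - 1) * (L*K) := mul_nonneg (by linarith) (mul_nonneg hL hK)
    have p5 : (0:ℝ) ≤ ((n:ℝ) - 1/4) * c^2 := mul_nonneg (by linarith) (sq_nonneg c)
    have p6 : (0:ℝ) ≤ (n:ℝ) * A := mul_nonneg hu0 hA.le
    nlinarith [sq_nonneg (c+(n:ℝ)), mul_nonneg hu0 (abs_nonneg c)]
  rw [Real.norm_eq_abs, Real.norm_eq_abs, abs_of_nonneg (hgnn _), abs_of_nonneg (hgnn _), key]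
  calc g n * ((((c+n)^2*e^2 + L) * K) / ((A + n) * (n + 1)))
      ≤ g n * (1/2) := mul_le_mul_of_nonneg_left hfac (hgnn n)
    _ = 1/2 * g n := by ring

theorem jacobi_to_bessel_limit (α lam x : ℝ) (hα : α > -(1/2)) :
    Tendsto
      (fun ε : ℝ =>
        hyp2F1 ((α : ℂ) + 1/2 + Complex.I * lam / (2 * ε))
          ((α : ℂ) + 1/2 - Complex.I * lam / (2 * ε)) ((α : ℂ) + 1)
          (-(Real.sinh (ε * x) : ℂ) ^ 2))
      (nhdsWithin 0 (Set.Ioi 0)) (nhds ((besselNorm α (lam * x) : ℂ))) := by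
  have hα1 : (0:ℝ) < α + 1 := by linarith
  set K : ℝ := x^2 * Real.exp (2*|x|) with hKdef
  have hK0 : (0:ℝ) ≤ K := by positivity
  obtain ⟨ε₀, hε₀pos, hε₀le1, hε₀K⟩ :
      ∃ e : ℝ, 0 < e ∧ e ≤ 1 ∧ e^2 * K ≤ 1/4 := by
    refine ⟨min 1 (1/(2*(K+1))), lt_min one_pos (by positivity), min_le_left _ _, ?_⟩
    have h1 : min 1 (1/(2*(K+1))) ≤ 1/(2*(K+1)) := min_le_right _ _
    have h0 : (0:ℝ) < min 1 (1/(2*(K+1))) := lt_min one_pos (by positivity)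
    have h2 : (min 1 (1/(2*(K+1))))^2 ≤ (1/(2*(K+1)))^2 := by
      apply pow_le_pow_left₀ h0.le h1
    have h4 : (1/(2*(K+1)))^2 * K ≤ 1/4 := by
      rw [div_pow, div_mul_eq_mul_div, div_le_iff₀ (by positivity)]
      nlinarith
    nlinarith
  have hQpos : ∀ n : ℕ, (0:ℝ) < (ascPochhammer ℝ n).eval (α+1) :=
    fun n => ascPochhammer_pos n _ hα1
  -- dominating bound
  have hsum : Summable (fun n : ℕ =>
      (∏ k ∈ Finset.range n, (((α+1/2+k)^2*ε₀^2 + lam^2/4) * K)) /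
      ((ascPochhammer ℝ n).eval (α+1) * n.factorial)) :=
    g_summable (α+1/2) (lam^2/4) (α+1) ε₀ K hα1 (by positivity) hK0 hε₀K
  -- pointwise convergence of real terms
  have hs : Tendsto (fun ε : ℝ => Real.sinh (ε*x)^2) (nhdsWithin 0 (Set.Ioi 0)) (nhds 0) := by
    have hcont : Continuous fun ε : ℝ => Real.sinh (ε*x)^2 := by continuity
    have h := hcont.tendsto 0
    simp only [zero_mul, Real.sinh_zero, ne_eq, OfNat.ofNat_ne_zero, not_false_eq_true,
      zero_pow] at h
    exact h.mono_left nhdsWithin_le_nhds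
  have hd : HasDerivAt (fun ε : ℝ => Real.sinh (ε*x)) x 0 := by
    have h1 : HasDerivAt (fun ε : ℝ => ε * x) x 0 := by
      simpa using (hasDerivAt_id (0:ℝ)).mul_const x
    have h2 := (Real.hasDerivAt_sinh ((0:ℝ)*x)).comp 0 h1
    simpa [Function.comp_def] using h2
  have ht : Tendsto (fun ε : ℝ => Real.sinh (ε*x)/ε) (nhdsWithin 0 (Set.Ioi 0)) (nhds x) := by
    have h := hasDerivAt_iff_tendsto_slope.mp hd
    have h2 := h.mono_left (nhdsWithin_mono (0:ℝ)
      (fun y hy => ne_of_gt hy : Set.Ioi (0:ℝ) ⊆ {(0:ℝ)}ᶜ))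
    refine h2.congr fun ε => ?_
    simp [slope_def_field]
  have ht2 : Tendsto (fun ε : ℝ => (Real.sinh (ε*x)/ε)^2)
      (nhdsWithin 0 (Set.Ioi 0)) (nhds (x^2)) := ht.pow 2
  have hlim : ∀ n : ℕ, Tendsto
      (fun ε : ℝ =>
        cpoch ((α : ℂ) + 1/2 + Complex.I * lam / (2 * ε)) n *
          cpoch ((α : ℂ) + 1/2 - Complex.I * lam / (2 * ε)) n /
          (cpoch ((α : ℂ) + 1) n * (n.factorial : ℂ)) * (-(Real.sinh (ε * x) : ℂ) ^ 2) ^ n)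
      (nhdsWithin 0 (Set.Ioi 0)) (nhds
        (((-1:ℝ)^n * ((lam*x)^2/4)^n /
          ((ascPochhammer ℝ n).eval (α+1) * n.factorial) : ℝ) : ℂ)) := by
    intro n
    have hprod : Tendsto (fun ε : ℝ => ∏ k ∈ Finset.range n,
        ((α+1/2+(k:ℝ))^2 * Real.sinh (ε*x)^2 + lam^2/4 * (Real.sinh (ε*x)/ε)^2))
        (nhdsWithin 0 (Set.Ioi 0)) (nhds (((lam*x)^2/4)^n)) := by
      have h := tendsto_finset_prod (Finset.range n)
        (fun k _ => ((hs.const_mul ((α+1/2+(k:ℝ))^2)).add (ht2.const_mul (lam^2/4))))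
      have heq : (∏ k ∈ Finset.range n, ((α+1/2+(k:ℝ))^2*0 + lam^2/4*x^2))
          = ((lam*x)^2/4)^n := by
        simp only [mul_zero, zero_add, Finset.prod_const, Finset.card_range]
        congr 1
        ring
      rw [← heq]
      exact h
    have hFlim : Tendsto (fun ε : ℝ => rterm α lam x ε n)
        (nhdsWithin 0 (Set.Ioi 0)) (nhds ((-1:ℝ)^n * ((lam*x)^2/4)^n /
          ((ascPochhammer ℝ n).eval (α+1) * n.factorial))) := by
      simp only [rterm]
      exact (hprod.const_mul ((-1:ℝ)^n)).div_const _
    have hC := (Complex.continuous_ofReal.tendsto _).comp hFlim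
    refine hC.congr' ?_
    filter_upwards [self_mem_nhdsWithin] with ε hε
    exact (term_eq α lam x (ne_of_gt hε) n).symm
  have hbound : ∀ᶠ ε : ℝ in nhdsWithin 0 (Set.Ioi 0), ∀ n : ℕ,
      ‖cpoch ((α : ℂ) + 1/2 + Complex.I * lam / (2 * ε)) n *
          cpoch ((α : ℂ) + 1/2 - Complex.I * lam / (2 * ε)) n /
          (cpoch ((α : ℂ) + 1) n * (n.factorial : ℂ)) *
          (-(Real.sinh (ε * x) : ℂ) ^ 2) ^ n‖ ≤
        (∏ k ∈ Finset.range n, (((α+1/2+k)^2*ε₀^2 + lam^2/4) * K)) /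
          ((ascPochhammer ℝ n).eval (α+1) * n.factorial) := by
    filter_upwards [Ioc_mem_nhdsGT hε₀pos] with ε hε
    intro n
    rw [term_eq α lam x (ne_of_gt hε.1) n, Complex.norm_real, Real.norm_eq_abs]
    have hD : (0:ℝ) < (ascPochhammer ℝ n).eval (α+1) * n.factorial := by
      have := hQpos n; positivity
    have hPnn : (0:ℝ) ≤ ∏ k ∈ Finset.range n,
        ((α+1/2+(k:ℝ))^2 * Real.sinh (ε*x)^2 + lam^2/4 * (Real.sinh (ε*x)/ε)^2) :=
      Finset.prod_nonneg fun k _ => by positivity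
    have habs : |rterm α lam x ε n| = (∏ k ∈ Finset.range n,
        ((α+1/2+(k:ℝ))^2 * Real.sinh (ε*x)^2 + lam^2/4 * (Real.sinh (ε*x)/ε)^2)) /
        ((ascPochhammer ℝ n).eval (α+1) * n.factorial) := by
      unfold rterm
      rw [abs_div, abs_mul, abs_pow, abs_neg, abs_one, one_pow, one_mul,
        abs_of_nonneg hPnn, abs_of_pos hD]
    rw [habs]
    apply (div_le_div_iff_of_pos_right hD).mpr
    apply Finset.prod_le_prod
    · intro k _; positivity
    · intro k _
      have hS := sinh_sq_le (ε*x)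
      have h1 : Real.sinh (ε*x)^2 ≤ ε^2 * K := by
        have h2 : |ε*x| = ε*|x| := by rw [abs_mul, abs_of_pos hε.1]
        have h3 : Real.exp (2*(ε*|x|)) ≤ Real.exp (2*|x|) := by
          apply Real.exp_le_exp.mpr
          nlinarith [abs_nonneg x, hε.1, hε.2, hε₀le1]
        calc Real.sinh (ε*x)^2 ≤ (ε*x)^2 * Real.exp (2*|ε*x|) := hS
          _ = ε^2 * (x^2 * Real.exp (2*(ε*|x|))) := by rw [h2]; ring
          _ ≤ ε^2 * (x^2 * Real.exp (2*|x|)) := by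
              refine mul_le_mul_of_nonneg_left ?_ (sq_nonneg ε)
              exact mul_le_mul_of_nonneg_left h3 (sq_nonneg x)
      have h4 : (Real.sinh (ε*x)/ε)^2 ≤ K := by
        rw [div_pow, div_le_iff₀ (pow_pos hε.1 2)]
        calc Real.sinh (ε*x)^2 ≤ ε^2*K := h1
          _ = K * ε^2 := by ring
      have h5 : ε^2 ≤ ε₀^2 := by nlinarith [hε.1, hε.2]
      have p1 := mul_le_mul_of_nonneg_left h1 (sq_nonneg (α+1/2+(k:ℝ)))
      have p2 := mul_le_mul_of_nonneg_left h5 (mul_nonneg (sq_nonneg (α+1/2+(k:ℝ))) hK0)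
      have p3 := mul_le_mul_of_nonneg_left h4 (by positivity : (0:ℝ) ≤ lam^2/4)
      nlinarith [sq_nonneg (α+1/2+(k:ℝ)), hK0]
  have hBC : ((besselNorm α (lam*x) : ℝ) : ℂ) = ∑' n : ℕ,
      (((-1:ℝ)^n * ((lam*x)^2/4)^n /
        ((ascPochhammer ℝ n).eval (α+1) * n.factorial) : ℝ) : ℂ) := by
    rw [bessel_eq α hα1 (lam*x), Complex.ofReal_tsum]
  rw [hBC]
  simp only [hyp2F1]
  exact tendsto_tsum_of_dominated_convergence hsum hlim hbound
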